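/- Let ν : Γ → ℝ³ be a 1-Lipschitz unit vector field on Γ ⊂ ℝ³ and let κ_{i,j} be as defined by κ_{i,j}(x,y) := [ (x_i − y_i) − (ν(x)·(x−y)) ν_i(x) ] [ ν_j(x) − ν_j(y) ] / |x − y|³. Then for all x, y, z ∈ Γ with x ≠ y, z ≠ y, and 2|x − z| ≤ |x − y|, one has |κ_{i,j}(x,y) − κ_{i,j}(z,y)| ≤ 2|x−z|/|x−y|² + 3|x−z|/|x−y| + 3|x−z|/|x−y|² + 216|x−z|/|x−y|². -/

import Mathlib

/-- The kernel `κ_{i,j}(x,y)` arising in the surface gradient of the commutator `C_ν`. -/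
noncomputable def kappa (ν : EuclideanSpace ℝ (Fin 3) → EuclideanSpace ℝ (Fin 3))
    (i j : Fin 3) (x y : EuclideanSpace ℝ (Fin 3)) : ℝ :=
  ((x i - y i) - (inner ℝ (ν x) (x - y) : ℝ) * ν x i) * (ν x j - ν y j) / ‖x - y‖ ^ 3

set_option maxHeartbeats 2000000

private lemma coord_abs_le_norm (w : EuclideanSpace ℝ (Fin 3)) (i : Fin 3) : |w i| ≤ ‖w‖ := by
  have h : w i = inner ℝ (EuclideanSpace.single i (1:ℝ)) w := by
    simp [EuclideanSpace.inner_single_left]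
  rw [h]
  calc |(inner ℝ (EuclideanSpace.single i (1:ℝ)) w : ℝ)| ≤ ‖EuclideanSpace.single i (1:ℝ)‖ * ‖w‖ :=
        abs_real_inner_le_norm _ _
    _ = ‖w‖ := by simp [EuclideanSpace.norm_single]

private lemma coord_sub_abs_le_norm (u v : EuclideanSpace ℝ (Fin 3)) (i : Fin 3) :
    |u i - v i| ≤ ‖u - v‖ := by
  have := coord_abs_le_norm (u - v) i
  simpa using this

/-- Hölder-type difference estimate for the kernel `κ_{i,j}` with a `1`-Lipschitz
unit vector field, under the condition `2|x−z| ≤ |x−y|`. -/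
theorem stmt5 (Γ : Set (EuclideanSpace ℝ (Fin 3)))
    (ν : EuclideanSpace ℝ (Fin 3) → EuclideanSpace ℝ (Fin 3))
    (hunit : ∀ x ∈ Γ, ‖ν x‖ = 1)
    (hlip : ∀ x ∈ Γ, ∀ z ∈ Γ, ‖ν x - ν z‖ ≤ ‖x - z‖)
    (i j : Fin 3)
    (x y z : EuclideanSpace ℝ (Fin 3)) (hx : x ∈ Γ) (hy : y ∈ Γ) (hz : z ∈ Γ)
    (hxy : x ≠ y) (hzy : z ≠ y) (h : 2 * ‖x - z‖ ≤ ‖x - y‖) :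
    |kappa ν i j x y - kappa ν i j z y| ≤
      2 * ‖x - z‖ / ‖x - y‖ ^ 2 + 3 * ‖x - z‖ / ‖x - y‖ +
      3 * ‖x - z‖ / ‖x - y‖ ^ 2 + 216 * ‖x - z‖ / ‖x - y‖ ^ 2 := by
  have hxy' : x - y ≠ 0 := sub_ne_zero.mpr hxy
  have hzy' : z - y ≠ 0 := sub_ne_zero.mpr hzy
  set a := ‖x - y‖ with ha
  set b := ‖z - y‖ with hb
  set c := ‖x - z‖ with hc
  have ha0 : 0 < a := norm_pos_iff.mpr hxy'
  have hb0 : 0 < b := norm_pos_iff.mpr hzy'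
  have hc0 : 0 ≤ c := norm_nonneg _
  have hca : 2 * c ≤ a := h
  have hba : b ≤ 3/2 * a := by
    have hzyeq : z - y = (z - x) + (x - y) := by abel
    have : b ≤ ‖z - x‖ + ‖x - y‖ := by rw [hb, hzyeq]; exact norm_add_le _ _
    rw [norm_sub_rev] at this
    linarith
  have hab : a ≤ 2 * b := by
    have hxyeq : x - y = (x - z) + (z - y) := by abel
    have : a ≤ ‖x - z‖ + ‖z - y‖ := by rw [ha, hxyeq]; exact norm_add_le _ _
    linarith
  have hbc : |b - a| ≤ c := by
    have h1 := abs_norm_sub_norm_le (z - y) (x - y)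
    have h2 : (z - y) - (x - y) = z - x := by abel
    rw [h2, norm_sub_rev z x] at h1
    exact h1
  have hux : ‖ν x‖ = 1 := hunit x hx
  have huz : ‖ν z‖ = 1 := hunit z hz
  set p := (inner ℝ (ν x) (x - z) : ℝ) with hp'
  set q := (inner ℝ (ν x) (z - y) : ℝ) with hq'
  set r := (inner ℝ (ν z) (z - y) : ℝ) with hr'
  have hpq : (inner ℝ (ν x) (x - y) : ℝ) = p + q := by
    rw [show x - y = (x - z) + (z - y) by abel, inner_add_right]
  -- basic scalar estimates
  have hnx : |ν x i| ≤ 1 := by have := coord_abs_le_norm (ν x) i; rw [hux] at this; exact this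
  have hnz : |ν z i| ≤ 1 := by have := coord_abs_le_norm (ν z) i; rw [huz] at this; exact this
  have hp : |p| ≤ c := by
    calc |p| ≤ ‖ν x‖ * ‖x - z‖ := abs_real_inner_le_norm _ _
      _ = c := by rw [hux]; ring
  have hr : |r| ≤ b := by
    calc |r| ≤ ‖ν z‖ * ‖z - y‖ := abs_real_inner_le_norm _ _
      _ = b := by rw [huz]; ring
  have hBx : |ν x j - ν y j| ≤ a :=
    (coord_sub_abs_le_norm (ν x) (ν y) j).trans (hlip x hx y hy)
  have hBz : |ν z j - ν y j| ≤ b :=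
    (coord_sub_abs_le_norm (ν z) (ν y) j).trans (hlip z hz y hy)
  have hBd : |(ν x j - ν y j) - (ν z j - ν y j)| ≤ c := by
    have : (ν x j - ν y j) - (ν z j - ν y j) = ν x j - ν z j := by ring
    rw [this]
    exact (coord_sub_abs_le_norm (ν x) (ν z) j).trans (hlip x hx z hz)
  have hnd : |ν x i - ν z i| ≤ c :=
    (coord_sub_abs_le_norm (ν x) (ν z) i).trans (hlip x hx z hz)
  have hxzi : |x i - z i| ≤ c := coord_sub_abs_le_norm x z i
  have hzyi : |z i - y i| ≤ b := coord_sub_abs_le_norm z y i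
  have hN1 : |(x i - z i) - p * ν x i| ≤ 2 * c := by
    calc |(x i - z i) - p * ν x i| ≤ |x i - z i| + |p * ν x i| := abs_sub _ _
      _ ≤ c + c * 1 := by
          gcongr
          rw [abs_mul]
          exact mul_le_mul hp hnx (abs_nonneg _) hc0
      _ = 2 * c := by ring
  have hqrd : |q - r| ≤ c * b := by
    have heq : q - r = (inner ℝ (ν x - ν z) (z - y) : ℝ) := by rw [inner_sub_left]
    rw [heq]
    calc |(inner ℝ (ν x - ν z) (z - y) : ℝ)| ≤ ‖ν x - ν z‖ * ‖z - y‖ := abs_real_inner_le_norm _ _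
      _ ≤ c * b := by gcongr; exact hlip x hx z hz
  have hN2 : |q * ν x i - r * ν z i| ≤ 2 * c * b := by
    have heq : q * ν x i - r * ν z i = (q - r) * ν x i + r * (ν x i - ν z i) := by ring
    rw [heq]
    calc |(q - r) * ν x i + r * (ν x i - ν z i)| ≤ |(q - r) * ν x i| + |r * (ν x i - ν z i)| :=
          abs_add_le _ _
      _ ≤ (c * b) * 1 + b * c := by
          rw [abs_mul, abs_mul]
          gcongr <;> first | exact hqrd | exact hnx | exact hr | exact hnd
      _ = 2 * c * b := by ring
  have hAz : |(z i - y i) - r * ν z i| ≤ 2 * b := by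
    calc |(z i - y i) - r * ν z i| ≤ |z i - y i| + |r * ν z i| := abs_sub _ _
      _ ≤ b + b * 1 := by
          gcongr
          rw [abs_mul]
          exact mul_le_mul hr hnz (abs_nonneg _) hb0.le
      _ = 2 * b := by ring
  -- inverse-cube estimate
  have hinv : |1/a^3 - 1/b^3| ≤ 48 * c / a^4 := by
    have key : 1/a^3 - 1/b^3 = (b^3 - a^3)/(a^3 * b^3) := by
      field_simp
    rw [key, abs_div, abs_of_pos (by positivity : (0:ℝ) < a^3 * b^3)]
    rw [div_le_div_iff₀ (by positivity) (by positivity)]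
    have habs : |b^3 - a^3| ≤ c * (b^2 + a*b + a^2) := by
      have heq : b^3 - a^3 = (b - a) * (b^2 + a*b + a^2) := by ring
      rw [heq, abs_mul, abs_of_nonneg (by positivity : (0:ℝ) ≤ b^2 + a*b + a^2)]
      gcongr
    have h1 : b^2 + a*b + a^2 ≤ 19/4 * a^2 := by nlinarith
    have h2 : a^3 ≤ 8 * b^3 := by nlinarith [pow_le_pow_left₀ ha0.le hab 3]
    nlinarith [mul_le_mul_of_nonneg_right habs (pow_nonneg ha0.le 4),
      mul_le_mul_of_nonneg_left h1 (mul_nonneg hc0 (pow_nonneg ha0.le 4)),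
      mul_le_mul_of_nonneg_left h2 (mul_nonneg hc0 (pow_nonneg ha0.le 3)),
      mul_nonneg hc0 (pow_nonneg ha0.le 6)]
  -- decomposition
  have hκx : kappa ν i j x y = ((x i - y i) - (p + q) * ν x i) * (ν x j - ν y j) / a^3 := by
    simp only [kappa]
    rw [hpq]
    try rw [ha]
  have hκz : kappa ν i j z y = ((z i - y i) - r * ν z i) * (ν z j - ν y j) / b^3 := by
    simp only [kappa]
    try rw [hr']
    try rw [hb]
  set Bx := ν x j - ν y j with hBx'
  set Bz := ν z j - ν y j with hBz'
  have key : kappa ν i j x y - kappa ν i j z y =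
      ((x i - z i) - p * ν x i) * Bx / a^3
      + (-(q * ν x i - r * ν z i)) * Bx / a^3
      + ((z i - y i) - r * ν z i) * (Bx - Bz) / a^3
      + ((z i - y i) - r * ν z i) * Bz * (1/a^3 - 1/b^3) := by
    rw [hκx, hκz]
    field_simp
    ring
  rw [key]
  have T1 : |((x i - z i) - p * ν x i) * Bx / a^3| ≤ 2 * c / a^2 := by
    rw [abs_div, abs_mul, abs_of_pos (by positivity : (0:ℝ) < a^3)]
    have heq : 2 * c / a^2 = (2 * c) * a / a^3 := by field_simp
    rw [heq]
    gcongr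
  have T2 : |(-(q * ν x i - r * ν z i)) * Bx / a^3| ≤ 3 * c / a := by
    rw [abs_div, abs_mul, abs_neg, abs_of_pos (by positivity : (0:ℝ) < a^3)]
    calc |q * ν x i - r * ν z i| * |Bx| / a^3 ≤ (2 * c * b) * a / a^3 := by gcongr
      _ ≤ (2 * c * (3/2 * a)) * a / a^3 := by gcongr
      _ = 3 * c / a := by field_simp
  have T3 : |((z i - y i) - r * ν z i) * (Bx - Bz) / a^3| ≤ 3 * c / a^2 := by
    rw [abs_div, abs_mul, abs_of_pos (by positivity : (0:ℝ) < a^3)]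
    calc |(z i - y i) - r * ν z i| * |Bx - Bz| / a^3 ≤ (2 * b) * c / a^3 := by gcongr
      _ ≤ (2 * (3/2 * a)) * c / a^3 := by gcongr
      _ = 3 * c / a^2 := by field_simp
  have T4 : |((z i - y i) - r * ν z i) * Bz * (1/a^3 - 1/b^3)| ≤ 216 * c / a^2 := by
    rw [abs_mul, abs_mul]
    calc |(z i - y i) - r * ν z i| * |Bz| * |1/a^3 - 1/b^3|
        ≤ (2 * b) * b * (48 * c / a^4) := by
          gcongr
      _ ≤ (2 * (3/2 * a)) * (3/2 * a) * (48 * c / a^4) := by gcongr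
      _ = 216 * c * a^2 / a^4 := by ring
      _ = 216 * c / a^2 := by field_simp
  calc |((x i - z i) - p * ν x i) * Bx / a^3
      + (-(q * ν x i - r * ν z i)) * Bx / a^3
      + ((z i - y i) - r * ν z i) * (Bx - Bz) / a^3
      + ((z i - y i) - r * ν z i) * Bz * (1/a^3 - 1/b^3)|
      ≤ |((x i - z i) - p * ν x i) * Bx / a^3|
      + |(-(q * ν x i - r * ν z i)) * Bx / a^3|
      + |((z i - y i) - r * ν z i) * (Bx - Bz) / a^3|
      + |((z i - y i) - r * ν z i) * Bz * (1/a^3 - 1/b^3)| := by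
        exact (abs_add_le _ _).trans (by gcongr; exact (abs_add_le _ _).trans (by gcongr; exact abs_add_le _ _))
    _ ≤ 2 * c / a^2 + 3 * c / a + 3 * c / a^2 + 216 * c / a^2 := by
        gcongr <;> first | exact T1 | exact T2 | exact T3 | exact T4
    _ = 2 * c / a ^ 2 + 3 * c / a + 3 * c / a ^ 2 + 216 * c / a ^ 2 := by norm_num
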